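/- arXiv:1605.01034 — 2 statements merged into one kernel-verified Lean document; each statement's English description precedes it below -/
import Mathlib

section
/- Let (R, m) be a Noetherian local ring and let a_1 ⊇ a_2 ⊇ a_3 ⊇ ⋯ be a decreasing sequence of m-primary ideals of R forming a graded sequence, i.e. a_i · a_j ⊆ a_{i+j} for all i, j ≥ 1 (with a_0 = R). Assume the linear topology on R defined by the filtration a_1 ⊇ a_2 ⊇ ⋯ coincides with the m-adic topology, i.e. for every k ≥ 1 there exists m ≥ 1 with a_m ⊆ m^k (the converse containment being automatic since each a_m is m-primary). If the associated graded ring ⨁_{m≥0} a_m/a_{m+1} is a finitely generated algebra over R/a_1, then the Rees-type algebra ⨁_{m≥0} a_m (realized, e.g., as the R-subalgebra of the polynomial ring R[T] consisting of polynomials whose coefficient of T^m lies in a_m for every m) is a finitely generated R-algebra. -/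
set_option synthInstance.maxHeartbeats 1000000
set_option maxHeartbeats 1000000
set_option linter.unusedVariables false
set_option linter.unnecessarySimpa false

open Polynomial

section ReesAux

variable {R : Type*} [CommRing R]

def monProds (gens : Set (R × ℕ)) (m : ℕ) : Set R :=
  {y | ∃ l : List (R × ℕ), (∀ p ∈ l, p ∈ gens) ∧ (l.map Prod.snd).sum = m ∧
    (l.map Prod.fst).prod = y}

theorem monProds_mul {gens : Set (R × ℕ)} {i j : ℕ} {y z : R}
    (hy : y ∈ monProds gens i) (hz : z ∈ monProds gens j) :
    y * z ∈ monProds gens (i + j) := by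
  obtain ⟨l, hl, hls, hlp⟩ := hy
  obtain ⟨l', hl', hls', hlp'⟩ := hz
  refine ⟨l ++ l', ?_, ?_, ?_⟩
  · intro p hp
    rcases List.mem_append.mp hp with h | h
    · exact hl p h
    · exact hl' p h
  · simp [hls, hls']
  · simp [hlp, hlp']

theorem span_monProds_mul (gens : Set (R × ℕ)) (i j : ℕ) :
    Ideal.span (monProds gens i) * Ideal.span (monProds gens j) ≤
      Ideal.span (monProds gens (i + j)) := by
  rw [Ideal.span_mul_span']
  refine Ideal.span_le.mpr ?_
  rintro x hx
  obtain ⟨y, hy, z, hz, rfl⟩ := Set.mem_mul.mp hx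
  exact Ideal.subset_span (monProds_mul hy hz)

theorem one_mem_monProds (gens : Set (R × ℕ)) : (1 : R) ∈ monProds gens 0 :=
  ⟨[], by simp, by simp, by simp⟩

def monAlg (gens : Set (R × ℕ)) : Subalgebra R R[X] where
  carrier := {p | ∀ m : ℕ, p.coeff m ∈ Ideal.span (monProds gens m)}
  add_mem' {p q} hp hq := fun m => by
    rw [Polynomial.coeff_add]; exact add_mem (hp m) (hq m)
  mul_mem' {p q} hp hq := fun m => by
    rw [Polynomial.coeff_mul]
    refine Ideal.sum_mem _ fun x hx => ?_
    have hxm : x.1 + x.2 = m := Finset.HasAntidiagonal.mem_antidiagonal.mp hx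
    have := span_monProds_mul gens x.1 x.2 (Ideal.mul_mem_mul (hp x.1) (hq x.2))
    rwa [hxm] at this
  algebraMap_mem' r := fun m => by
    rcases eq_or_ne m 0 with h | h
    · subst h
      have h1 : (1 : R) ∈ Ideal.span (monProds gens 0) :=
        Ideal.subset_span (one_mem_monProds gens)
      simpa [Polynomial.coeff_C] using Ideal.mul_mem_left _ r h1
    · simp [Polynomial.coeff_C, h]

theorem mem_monAlg {gens : Set (R × ℕ)} {p : R[X]} :
    p ∈ monAlg gens ↔ ∀ m : ℕ, p.coeff m ∈ Ideal.span (monProds gens m) := Iff.rfl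

end ReesAux

/-- The Rees-type algebra `⨁_{m≥0} a_m` of a graded sequence of ideals `a`, realized as the
`R`-subalgebra of the polynomial ring `R[T]` consisting of the polynomials whose coefficient
of `T^m` lies in `a m` for every `m`. -/
def reesSubalgebra {R : Type*} [CommRing R] (a : ℕ → Ideal R)
    (h0 : a 0 = ⊤)
    (hmul : ∀ i j : ℕ, ∀ x ∈ a i, ∀ y ∈ a j, x * y ∈ a (i + j)) :
    Subalgebra R (Polynomial R) where
  carrier := {p | ∀ m : ℕ, p.coeff m ∈ a m}
  add_mem' {p q} hp hq := fun m => by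
    rw [Polynomial.coeff_add]; exact (a m).add_mem (hp m) (hq m)
  mul_mem' {p q} hp hq := fun m => by
    rw [Polynomial.coeff_mul]
    refine Ideal.sum_mem _ fun x hx => ?_
    have hxm : x.1 + x.2 = m := Finset.HasAntidiagonal.mem_antidiagonal.mp hx
    simpa [hxm] using hmul x.1 x.2 _ (hp x.1) _ (hq x.2)
  algebraMap_mem' r := fun m => by
    rcases eq_or_ne m 0 with h | h
    · subst h
      simp [Polynomial.coeff_C, h0]
    · simp [Polynomial.coeff_C, h]

theorem mem_reesSubalgebra {R : Type*} [CommRing R] {a : ℕ → Ideal R}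
    {h0 : a 0 = ⊤} {hmul : ∀ i j : ℕ, ∀ x ∈ a i, ∀ y ∈ a j, x * y ∈ a (i + j)}
    {p : Polynomial R} :
    p ∈ reesSubalgebra a h0 hmul ↔ ∀ m : ℕ, p.coeff m ∈ a m :=
  Iff.rfl

/-- The ideal `⨁_{m≥0} a_{m+1} T^m` of the Rees-type algebra; the quotient by this ideal
is the associated graded ring `⨁_{m≥0} a_m / a_{m+1}` of the filtration. -/
def reesGradedIdeal {R : Type*} [CommRing R] (a : ℕ → Ideal R)
    (h0 : a 0 = ⊤)
    (hmul : ∀ i j : ℕ, ∀ x ∈ a i, ∀ y ∈ a j, x * y ∈ a (i + j)) :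
    Ideal (reesSubalgebra a h0 hmul) where
  carrier := {p | ∀ m : ℕ, (p : Polynomial R).coeff m ∈ a (m + 1)}
  zero_mem' := fun m => by simp
  add_mem' {p q} hp hq := fun m => by
    have : ((p + q : reesSubalgebra a h0 hmul) : Polynomial R)
        = (p : Polynomial R) + (q : Polynomial R) := rfl
    rw [this, Polynomial.coeff_add]
    exact (a (m + 1)).add_mem (hp m) (hq m)
  smul_mem' c {x} hx := fun m => by
    have hc : ∀ k : ℕ, (c : Polynomial R).coeff k ∈ a k := c.2
    have : ((c • x : reesSubalgebra a h0 hmul) : Polynomial R)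
        = (c : Polynomial R) * (x : Polynomial R) := rfl
    rw [this, Polynomial.coeff_mul]
    refine Ideal.sum_mem _ fun y hy => ?_
    have hym : y.1 + y.2 = m := Finset.HasAntidiagonal.mem_antidiagonal.mp hy
    have := hmul y.1 (y.2 + 1) _ (hc y.1) _ (hx y.2)
    have heq : y.1 + (y.2 + 1) = m + 1 := by omega
    rwa [heq] at this

/-- Let `(R, 𝔪)` be a Noetherian local ring and let `a_1 ⊇ a_2 ⊇ ⋯` be a decreasing graded
sequence of `𝔪`-primary ideals (with `a_0 = R`).  Assume the linear topology defined by the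
filtration coincides with the `𝔪`-adic topology, i.e. for every `k ≥ 1` there is `m ≥ 1`
with `a_m ⊆ 𝔪^k`.  If the associated graded ring `⨁_{m≥0} a_m / a_{m+1}` (realized as the
quotient of the Rees-type algebra by `reesGradedIdeal`) is a finitely generated algebra,
then the Rees-type algebra `⨁_{m≥0} a_m` is a finitely generated `R`-algebra. -/
theorem reesSubalgebra_fg_of_gr_finiteType
    {R : Type*} [CommRing R] [IsNoetherianRing R] [IsLocalRing R]
    (a : ℕ → Ideal R)
    (h0 : a 0 = ⊤)
    (hdec : ∀ i : ℕ, a (i + 1) ≤ a i)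
    (hmul : ∀ i j : ℕ, ∀ x ∈ a i, ∀ y ∈ a j, x * y ∈ a (i + j))
    (hprimary : ∀ i : ℕ, 1 ≤ i → (a i).radical = IsLocalRing.maximalIdeal R)
    (htop : ∀ k : ℕ, 1 ≤ k → ∃ m : ℕ, 1 ≤ m ∧ a m ≤ (IsLocalRing.maximalIdeal R) ^ k)
    (hgr : Algebra.FiniteType R
      ((reesSubalgebra a h0 hmul) ⧸ (reesGradedIdeal a h0 hmul))) :
    (reesSubalgebra a h0 hmul).FG := by
  classical
  obtain ⟨s, hs⟩ := hgr.1
  have hmk : Function.Surjective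
      (Ideal.Quotient.mk (reesGradedIdeal a h0 hmul)) := Ideal.Quotient.mk_surjective
  choose lift hlift using hmk
  -- antitonicity of the filtration
  have hanti : ∀ {i j : ℕ}, i ≤ j → a j ≤ a i := by
    intro i j h
    induction j, h using Nat.le_induction with
    | base => exact le_rfl
    | succ j hj ih => exact (hdec j).trans ih
  -- the set of monomial generators
  set gens : Set (R × ℕ) := ⋃ g ∈ (s : Set _),
    (fun d => (((lift g : reesSubalgebra a h0 hmul) : Polynomial R).coeff d, d)) ''
      (Set.Iic (((lift g : reesSubalgebra a h0 hmul) : Polynomial R).natDegree)) with hgens_def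
  have hgens_fin : gens.Finite :=
    Set.Finite.biUnion s.finite_toSet (fun g _ => (Set.finite_Iic _).image _)
  have hgens_a : ∀ p ∈ gens, p.1 ∈ a p.2 := by
    intro p hp
    simp only [hgens_def, Set.mem_iUnion, Set.mem_image, Set.mem_Iic] at hp
    obtain ⟨g, hg, d, hd, rfl⟩ := hp
    exact (lift g).2 d
  -- notation
  set n : ℕ → Ideal R := fun m => Ideal.span (monProds gens m) with hn_def
  -- monomials of weight m lie in a m
  have hlist_a : ∀ l : List (R × ℕ), (∀ p ∈ l, p ∈ gens) →
      (l.map Prod.fst).prod ∈ a ((l.map Prod.snd).sum) := by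
    intro l
    induction l with
    | nil => intro _; simpa [h0] using Submodule.mem_top
    | cons hd tl ih =>
      intro hmem
      simp only [List.map_cons, List.prod_cons, List.sum_cons]
      exact hmul _ _ _ (hgens_a hd (hmem hd (List.mem_cons_self))) _
        (ih fun p hp => hmem p (List.mem_cons_of_mem _ hp))
  have hn_le_a : ∀ m, n m ≤ a m := by
    intro m
    rw [hn_def, Ideal.span_le]
    rintro y ⟨l, hl, hsum, rfl⟩
    exact hsum ▸ hlist_a l hl
  -- the subalgebra of the Rees algebra of elements with coefficients in the monomial spans
  set Dsub : Subalgebra R ↥(reesSubalgebra a h0 hmul) :=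
    (monAlg gens).comap (reesSubalgebra a h0 hmul).val with hDsub_def
  set π := Ideal.Quotient.mkₐ R (reesGradedIdeal a h0 hmul) with hπ_def
  have hmap : Dsub.map π = ⊤ := by
    rw [eq_top_iff, ← hs]
    refine Algebra.adjoin_le ?_
    intro g hg
    refine Subalgebra.mem_map.mpr ⟨lift g, ?_, ?_⟩
    · rw [hDsub_def, Subalgebra.mem_comap]
      intro m
      by_cases hm : m ≤ ((lift g : reesSubalgebra a h0 hmul) : Polynomial R).natDegree
      · refine Ideal.subset_span
          ⟨[(((lift g : reesSubalgebra a h0 hmul) : Polynomial R).coeff m, m)], ?_, by simp, by simp⟩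
        intro p hp
        simp only [List.mem_singleton] at hp
        subst hp
        simp only [hgens_def, Set.mem_iUnion, Set.mem_image, Set.mem_Iic]
        exact ⟨g, hg, m, hm, rfl⟩
      · show ((lift g : reesSubalgebra a h0 hmul) : Polynomial R).coeff m ∈ _
        rw [Polynomial.coeff_eq_zero_of_natDegree_lt (lt_of_not_ge hm)]
        exact zero_mem _
    · rw [hπ_def, Ideal.Quotient.mkₐ_eq_mk]
      exact hlift g
  -- the key degreewise approximation step
  have step : ∀ j, a j ≤ n j ⊔ a (j + 1) := by
    intro j x hx
    have hpmem : ∀ m : ℕ, (Polynomial.C x * Polynomial.X ^ j).coeff m ∈ a m := by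
      intro m
      rw [Polynomial.coeff_C_mul, Polynomial.coeff_X_pow]
      split_ifs with h
      · rw [mul_one, h]; exact hx
      · simp
    set p : ↥(reesSubalgebra a h0 hmul) := ⟨_, hpmem⟩ with hp_def
    have hπp : π p ∈ Dsub.map π := by rw [hmap]; trivial
    obtain ⟨qq, hqqD, hqq⟩ := Subalgebra.mem_map.mp hπp
    have hsub : p - qq ∈ reesGradedIdeal a h0 hmul := by
      rw [hπ_def, Ideal.Quotient.mkₐ_eq_mk] at hqq
      exact Ideal.Quotient.eq.mp hqq.symm
    have hsub' : ∀ m, ((p - qq : reesSubalgebra a h0 hmul) : Polynomial R).coeff m ∈ a (m + 1) :=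
      hsub
    have hcoeff : ((p - qq : reesSubalgebra a h0 hmul) : Polynomial R).coeff j
        = x - (qq : Polynomial R).coeff j := by
      have h1 : ((p - qq : reesSubalgebra a h0 hmul) : Polynomial R)
          = (p : Polynomial R) - (qq : Polynomial R) := rfl
      rw [h1, Polynomial.coeff_sub, hp_def]
      congr 1
      simp [Polynomial.coeff_C_mul, Polynomial.coeff_X_pow]
    refine Submodule.mem_sup.mpr
      ⟨(qq : Polynomial R).coeff j, ?_, x - (qq : Polynomial R).coeff j, ?_, by ring⟩
    · exact ((Subalgebra.mem_comap _ _ _).mp hqqD) j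
    · have := hsub' j
      rwa [hcoeff] at this
  -- span of monomials of weight at least m
  set c : ℕ → Ideal R := fun m => Ideal.span
    {y | ∃ l : List (R × ℕ), (∀ p ∈ l, p ∈ gens) ∧ m ≤ (l.map Prod.snd).sum ∧
      (l.map Prod.fst).prod = y} with hc_def
  have hnc : ∀ {m j : ℕ}, m ≤ j → n j ≤ c m := by
    intro m j h
    refine Ideal.span_mono ?_
    rintro y ⟨l, h1, h2, h3⟩
    exact ⟨l, h1, h2 ▸ h, h3⟩
  have happrox : ∀ m k, a m ≤ c m ⊔ a (m + k) := by
    intro m k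
    induction k with
    | zero => exact le_sup_right
    | succ k ih =>
      refine ih.trans (sup_le le_sup_left ?_)
      refine (step (m + k)).trans (sup_le ?_ ?_)
      · exact (hnc (Nat.le_add_right m k)).trans le_sup_left
      · exact le_sup_right
  -- monomials of positive weight lie in a 1
  have ha1 : a 1 ≤ IsLocalRing.maximalIdeal R :=
    le_of_le_of_eq Ideal.le_radical (hprimary 1 le_rfl)
  have key1 : ∀ l : List (R × ℕ), (∀ p ∈ l, p ∈ gens) → 1 ≤ (l.map Prod.snd).sum →
      (l.map Prod.fst).prod ∈ a 1 := by
    intro l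
    induction l with
    | nil => intro _ h; simp at h
    | cons hd tl ih =>
      intro hmem hsum
      simp only [List.map_cons, List.prod_cons, List.sum_cons] at hsum ⊢
      rcases Nat.eq_zero_or_pos hd.2 with h2 | h2
      · refine Ideal.mul_mem_left _ _ (ih (fun p hp => hmem p (List.mem_cons_of_mem _ hp)) ?_)
        omega
      · exact Ideal.mul_mem_right _ _
          (hanti h2 (hgens_a hd (hmem hd (List.mem_cons_self))))
  have hc_le_max : ∀ m, 1 ≤ m → c m ≤ IsLocalRing.maximalIdeal R := by
    intro m hm
    rw [hc_def, Ideal.span_le]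
    rintro y ⟨l, hl, hsum, rfl⟩
    exact ha1 (key1 l hl (hm.trans hsum))
  -- Krull intersection argument: a m ≤ c m
  have hkrull : ∀ m, 1 ≤ m → a m ≤ c m := by
    intro m hm x hx
    have hPmax : c m ≤ IsLocalRing.maximalIdeal R := hc_le_max m hm
    have hPne : c m ≠ ⊤ :=
      fun h => (IsLocalRing.maximalIdeal.isMaximal R).ne_top (top_le_iff.mp (h ▸ hPmax))
    letI : Nontrivial (R ⧸ c m) := Ideal.Quotient.nontrivial_iff.mpr hPne
    letI : IsLocalRing (R ⧸ c m) :=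
      IsLocalRing.of_surjective' (Ideal.Quotient.mk (c m)) Ideal.Quotient.mk_surjective
    set J : Ideal (R ⧸ c m) :=
      (IsLocalRing.maximalIdeal R).map (Ideal.Quotient.mk (c m)) with hJ_def
    have hJne : J ≠ ⊤ := by
      intro hJ
      have hcom : Ideal.comap (Ideal.Quotient.mk (c m)) J
          = IsLocalRing.maximalIdeal R ⊔ c m := by
        rw [hJ_def, Ideal.comap_map_of_surjective _ Ideal.Quotient.mk_surjective,
          ← RingHom.ker_eq_comap_bot, Ideal.mk_ker]
      rw [hJ, Ideal.comap_top] at hcom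
      exact (IsLocalRing.maximalIdeal.isMaximal R).ne_top
        (by rw [← sup_eq_left.mpr hPmax, ← hcom])
    have hbot : ⨅ i : ℕ, J ^ i = ⊥ := Ideal.iInf_pow_eq_bot_of_isLocalRing J hJne
    have hmem : Ideal.Quotient.mk (c m) x ∈ ⨅ i : ℕ, J ^ i := by
      refine (Submodule.mem_iInf _).mpr ?_
      intro K
      have hexists : ∃ k : ℕ, a (m + k) ≤ (IsLocalRing.maximalIdeal R) ^ K := by
        rcases Nat.eq_zero_or_pos K with hK | hK
        · exact ⟨0, by simp [hK]⟩
        · obtain ⟨m', hm', hle⟩ := htop K hK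
          exact ⟨m', (hanti (Nat.le_add_left m' m)).trans hle⟩
      obtain ⟨k, hk⟩ := hexists
      obtain ⟨y, hy, z, hz, hyz⟩ := Submodule.mem_sup.mp (happrox m k hx)
      have : Ideal.Quotient.mk (c m) x = Ideal.Quotient.mk (c m) z := by
        rw [← hyz, map_add, Ideal.Quotient.eq_zero_iff_mem.mpr hy, zero_add]
      rw [this, hJ_def, ← Ideal.map_pow]
      exact Ideal.mem_map_of_mem _ (hk hz)
    rw [hbot] at hmem
    exact Ideal.Quotient.eq_zero_iff_mem.mp
      ((Submodule.mem_bot _).mp hmem)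
  -- the finite generating set: shifted monomial generators
  set Gset : Set (Polynomial R) := ⋃ p ∈ gens,
    (fun t => Polynomial.C p.1 * Polynomial.X ^ t) '' Set.Iic p.2 with hGset_def
  have hGset_fin : Gset.Finite :=
    Set.Finite.biUnion hgens_fin (fun p _ => (Set.finite_Iic _).image _)
  have hGsub : ∀ p ∈ gens, ∀ t ≤ p.2,
      Polynomial.C p.1 * Polynomial.X ^ t ∈ Algebra.adjoin R Gset := by
    intro p hp t ht
    refine Algebra.subset_adjoin ?_
    simp only [hGset_def, Set.mem_iUnion, Set.mem_image, Set.mem_Iic]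
    exact ⟨p, hp, t, ht, rfl⟩
  -- shifted monomials lie in the adjoin
  have hshift : ∀ l : List (R × ℕ), (∀ p ∈ l, p ∈ gens) →
      ∀ t ≤ (l.map Prod.snd).sum,
      Polynomial.C ((l.map Prod.fst).prod) * Polynomial.X ^ t ∈ Algebra.adjoin R Gset := by
    intro l
    induction l with
    | nil =>
      intro _ t ht
      simp only [List.map_nil, List.sum_nil, Nat.le_zero] at ht
      subst ht
      simpa using Subalgebra.one_mem _
    | cons hd tl ih =>
      intro hmem t ht
      simp only [List.map_cons, List.prod_cons, List.sum_cons] at ht ⊢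
      have h1 : Polynomial.C hd.1 * Polynomial.X ^ (min hd.2 t) ∈ Algebra.adjoin R Gset :=
        hGsub hd (hmem hd (List.mem_cons_self)) _ (min_le_left _ _)
      have h2 : Polynomial.C ((tl.map Prod.fst).prod) * Polynomial.X ^ (t - min hd.2 t)
          ∈ Algebra.adjoin R Gset :=
        ih (fun p hp => hmem p (List.mem_cons_of_mem _ hp)) _ (by omega)
      have heq : Polynomial.C (hd.1 * (tl.map Prod.fst).prod) * Polynomial.X ^ t
          = (Polynomial.C hd.1 * Polynomial.X ^ (min hd.2 t)) *
            (Polynomial.C ((tl.map Prod.fst).prod) * Polynomial.X ^ (t - min hd.2 t)) := by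
        rw [mul_mul_mul_comm, ← Polynomial.C_mul, ← pow_add]
        congr 2
        omega
      rw [heq]
      exact mul_mem h1 h2
  -- every slice element gives a monomial in the adjoin
  have hCX : ∀ (m : ℕ) (x : R), x ∈ a m →
      Polynomial.C x * Polynomial.X ^ m ∈ Algebra.adjoin R Gset := by
    intro m x hx
    rcases Nat.eq_zero_or_pos m with rfl | hm
    · simpa [Polynomial.algebraMap_eq] using
        Subalgebra.algebraMap_mem (Algebra.adjoin R Gset) x
    · have hxc : x ∈ c m := hkrull m hm hx
      rw [hc_def] at hxc
      refine Submodule.span_induction ?_ ?_ ?_ ?_ hxc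
      · rintro y ⟨l, hl, hsum, rfl⟩
        exact hshift l hl m hsum
      · simpa using Subalgebra.zero_mem _
      · intro y z hy hz hy' hz'
        rw [Polynomial.C_add, add_mul]
        exact add_mem hy' hz'
      · intro r y hy hy'
        rw [smul_eq_mul, Polynomial.C_mul, mul_assoc]
        exact mul_mem (by simpa [Polynomial.algebraMap_eq] using
          Subalgebra.algebraMap_mem (Algebra.adjoin R Gset) r) hy'
  -- assemble
  rw [Subalgebra.fg_def]
  refine ⟨Gset, hGset_fin, le_antisymm ?_ ?_⟩
  · refine Algebra.adjoin_le ?_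
    intro q hq
    simp only [hGset_def, Set.mem_iUnion, Set.mem_image, Set.mem_Iic] at hq
    obtain ⟨p, hp, t, ht, rfl⟩ := hq
    intro m
    rw [Polynomial.coeff_C_mul, Polynomial.coeff_X_pow]
    split_ifs with h
    · rw [mul_one, h]
      exact hanti ht (hgens_a p hp)
    · simp
  · intro q hq
    rw [← Polynomial.sum_C_mul_X_pow_eq q, Polynomial.sum_def]
    exact Subalgebra.sum_mem _ (fun m _ => hCX m _ (hq m))
end

section
/- Let (R, m) be a Noetherian local ring and let p, q be two prime ideals of R satisfying p + q = m and p ∩ q = p·q. If the quotient ring R/q is a discrete valuation ring, then p is a principal ideal. -/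
/-- Let `(R, 𝔪)` be a Noetherian local ring and let `p`, `q` be two prime ideals of `R`
satisfying `p + q = 𝔪` and `p ∩ q = p·q`. If the quotient ring `R/q` is a discrete
valuation ring, then `p` is a principal ideal. -/
theorem isPrincipal_of_sup_eq_maximalIdeal_of_inf_eq_mul
    (R : Type*) [CommRing R] [IsNoetherianRing R] [IsLocalRing R]
    (p q : Ideal R) [p.IsPrime] [q.IsPrime]
    (hsup : p ⊔ q = IsLocalRing.maximalIdeal R)
    (hinf : p ⊓ q = p * q)
    [IsDiscreteValuationRing (R ⧸ q)] :
    p.IsPrincipal := by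
  obtain ⟨π, hπ⟩ := (IsPrincipalIdealRing.principal
    (IsLocalRing.maximalIdeal (R ⧸ q))).principal
  obtain ⟨t0, ht0⟩ := Ideal.Quotient.mk_surjective π
  have hqm : q ≤ IsLocalRing.maximalIdeal R := hsup ▸ le_sup_right
  have hpm : p ≤ IsLocalRing.maximalIdeal R := hsup ▸ le_sup_left
  -- t0 ∈ m
  have ht0m : t0 ∈ IsLocalRing.maximalIdeal R := by
    intro hu
    have : IsUnit π := ht0 ▸ hu.map (Ideal.Quotient.mk q)
    have hπm : π ∈ IsLocalRing.maximalIdeal (R ⧸ q) := by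
      rw [hπ]; exact Ideal.mem_span_singleton_self π
    exact hπm this
  rw [← hsup] at ht0m
  obtain ⟨a, ha, b, hb, hab⟩ := Submodule.mem_sup.mp ht0m
  have hmka : Ideal.Quotient.mk q a = π := by
    have : Ideal.Quotient.mk q b = 0 := Ideal.Quotient.eq_zero_iff_mem.mpr hb
    rw [← ht0, ← hab, map_add, this, add_zero]
  refine ⟨a, ?_⟩
  have key : p ≤ Ideal.span {a} ⊔ IsLocalRing.maximalIdeal R • p := by
    intro x hx
    -- mk x lies in the maximal ideal of R/q
    have hxm : Ideal.Quotient.mk q x ∈ IsLocalRing.maximalIdeal (R ⧸ q) := by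
      intro hu
      obtain ⟨u, hu⟩ := hu
      obtain ⟨y, hy⟩ := Ideal.Quotient.mk_surjective (↑u⁻¹ : R ⧸ q)
      have : Ideal.Quotient.mk q (x * y) = 1 := by
        rw [map_mul, hy, ← hu, Units.mul_inv]
      have h1 : (1 : R) - x * y ∈ q := by
        have := Ideal.Quotient.eq.mp this.symm
        simpa using this
      have : (1 : R) ∈ IsLocalRing.maximalIdeal R := by
        have hxy : x * y ∈ IsLocalRing.maximalIdeal R :=
          Ideal.mul_mem_right _ _ (hpm hx)
        have := add_mem (hqm h1) hxy
        simpa only [sub_add_cancel] using this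
      exact (IsLocalRing.maximalIdeal.isMaximal R).ne_top ((Ideal.eq_top_iff_one _).mpr this)
    rw [hπ, Submodule.mem_span_singleton] at hxm
    obtain ⟨c, hc⟩ := hxm
    obtain ⟨r, hr⟩ := Ideal.Quotient.mk_surjective c
    have hdiff : x - a * r ∈ p ⊓ q := by
      constructor
      · exact sub_mem hx (Ideal.mul_mem_right _ _ ha)
      · have : Ideal.Quotient.mk q (x - a * r) = 0 := by
          rw [map_sub, map_mul, hmka, hr, ← hc, smul_eq_mul]
          ring
        exact Ideal.Quotient.eq_zero_iff_mem.mp this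
    rw [hinf] at hdiff
    have hdiff' : x - a * r ∈ IsLocalRing.maximalIdeal R • p := by
      have : p * q ≤ IsLocalRing.maximalIdeal R * p := by
        rw [mul_comm]
        exact Ideal.mul_mono hqm le_rfl
      rw [Ideal.smul_eq_mul]
      exact this hdiff
    have : x = a * r + (x - a * r) := by ring
    rw [this]
    exact Submodule.add_mem_sup (Ideal.mem_span_singleton.mpr ⟨r, rfl⟩) hdiff'
  have hfg : p.FG := (isNoetherian_def.mp ‹IsNoetherianRing R› p)
  have hle : p ≤ Ideal.span {a} :=
    Submodule.le_of_le_smul_of_le_jacobson_bot hfg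
      (IsLocalRing.maximalIdeal_le_jacobson ⊥) key
  exact le_antisymm hle ((Ideal.span_singleton_le_iff_mem p).mpr ha)
end
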